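/- arXiv:1809.00742 — 2 statements merged into one kernel-verified Lean document; each statement's English description precedes it below -/
import Mathlib

section
/- Let P be a set of forbidden patterns all of the same length. Then P is right-justified if and only if for each pattern τ in P for which τ^← exists (i.e., the largest entry of τ is not in the first position), the permutation τ^← also belongs to P. -/
open Equiv

/-- The pattern `σ` (a length-`k` permutation) is contained in the length-`n`
permutation `π` : some subsequence of `π` is order isomorphic to `σ`. -/
def Contains {k n : ℕ} (σ : Equiv.Perm (Fin k)) (π : Equiv.Perm (Fin n)) : Prop :=
  ∃ f : Fin k → Fin n, StrictMono f ∧ ∀ a b : Fin k, σ a < σ b ↔ π (f a) < π (f b)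

lemma fin_strictMono_eq_id {k : ℕ} {f : Fin k → Fin k} (hf : StrictMono f) : f = id := by
  haveI : WellFoundedLT (Fin k) := inferInstance
  have hs : Function.Surjective f := Finite.surjective_of_injective hf.injective
  have h2 : StrictMono (id : Fin k → Fin k) := strictMono_id
  have h3 : Set.range f = Set.range (id : Fin k → Fin k) := by
    rw [Set.range_id, Set.range_eq_univ.2 hs]
  exact (hf.range_inj h2).1 h3

lemma perm_eq_of_orderIso {k : ℕ} {σ π : Equiv.Perm (Fin k)}
    (h : ∀ a b : Fin k, σ a < σ b ↔ π a < π b) : σ = π := by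
  have hsm : StrictMono (fun x => π (σ.symm x)) := by
    intro x y hxy
    exact (h (σ.symm x) (σ.symm y)).1 (by simpa using hxy)
  have hid := fin_strictMono_eq_id hsm
  apply Equiv.ext; intro a
  have h2 := congrFun hid (σ a)
  simpa using h2.symm

lemma contains_eq {k : ℕ} {σ π : Equiv.Perm (Fin k)} (h : Contains σ π) : σ = π := by
  obtain ⟨f, hf, hiff⟩ := h
  have := fin_strictMono_eq_id hf
  subst this
  exact perm_eq_of_orderIso (by simpa using hiff)

lemma contains_rfl {k : ℕ} (σ : Equiv.Perm (Fin k)) : Contains σ σ :=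
  ⟨id, strictMono_id, fun _ _ => Iff.rfl⟩

/-- A set of forbidden patterns, of possibly different lengths. -/
abbrev PatternSet : Type := Set ((k : ℕ) × Equiv.Perm (Fin k))

/-- `π` avoids every pattern of `P`, i.e. `π ∈ S_n(P)`. -/
def AvoidsSet {n : ℕ} (π : Equiv.Perm (Fin n)) (P : PatternSet) : Prop :=
  ∀ τ ∈ P, ¬ Contains τ.2 π

/-- The (0-indexed) position of the largest entry of `α`. -/
def maxPos {n : ℕ} (α : Equiv.Perm (Fin (n + 1))) : Fin (n + 1) := α⁻¹ (Fin.last n)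

/-- `α^→` : transpose the largest entry with the entry immediately to its right
(meaningful when `maxPos α ≠ Fin.last n`, i.e. the largest entry is not last). -/
def moveRight {n : ℕ} (α : Equiv.Perm (Fin (n + 1))) : Equiv.Perm (Fin (n + 1)) :=
  α * Equiv.swap (maxPos α) (maxPos α + 1)

/-- `α^←` : transpose the largest entry with the entry immediately to its left
(meaningful when `maxPos α ≠ 0`, i.e. the largest entry is not first). -/
def moveLeft {n : ℕ} (α : Equiv.Perm (Fin (n + 1))) : Equiv.Perm (Fin (n + 1)) :=
  α * Equiv.swap (maxPos α) (maxPos α - 1)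

/-- `P` is right-justified : moving the largest entry of a `P`-avoiding permutation one
position to the right again yields a `P`-avoiding permutation. -/
def RightJustified (P : PatternSet) : Prop :=
  ∀ (n : ℕ) (α : Equiv.Perm (Fin (n + 1))),
    AvoidsSet α P → maxPos α ≠ Fin.last n → AvoidsSet (moveRight α) P

/-- `α^{↓i}` : insert the new largest entry into site `i` of `α`; the `n+1` sites of a
length-`n` permutation are numbered `1, …, n+1` from right to left, so the new largest
entry lands at 0-indexed position `n - (i - 1)`. -/
def insertMax {n : ℕ} (α : Equiv.Perm (Fin n)) (i : ℕ) : Equiv.Perm (Fin (n + 1)) :=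
  (finSuccEquivLast.permCongr.symm α.optionCongr) *
    (Fin.revPerm * Fin.cycleRange (Fin.rev (⟨n - (i - 1), by omega⟩ : Fin (n + 1))) *
      Fin.revPerm)

/-- Site `i` of `α ∈ S_n(P)` is active (with respect to `P`). -/
def ActiveSite {n : ℕ} (P : PatternSet) (α : Equiv.Perm (Fin n)) (i : ℕ) : Prop :=
  1 ≤ i ∧ i ≤ n + 1 ∧ AvoidsSet (insertMax α i) P

/-- The number of active sites of `α` with respect to `P`. -/
noncomputable def numActive {n : ℕ} (P : PatternSet) (α : Equiv.Perm (Fin n)) : ℕ :=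
  Set.ncard {i : ℕ | ActiveSite P α i}

/-- Delete the largest entry of a length-`(n+1)` permutation. -/
def deleteMax {n : ℕ} (π : Equiv.Perm (Fin (n + 1))) : Equiv.Perm (Fin n) :=
  Equiv.removeNone (finSuccEquivLast.permCongr
    (π * (Fin.revPerm * Fin.cycleRange (Fin.rev (maxPos π)) * Fin.revPerm)⁻¹))

/-- The pattern `321`. -/
def perm321 : Equiv.Perm (Fin 3) := ⟨![2, 1, 0], ![2, 1, 0], by decide, by decide⟩
/-- The pattern `312`. -/
def perm312 : Equiv.Perm (Fin 3) := ⟨![2, 0, 1], ![1, 2, 0], by decide, by decide⟩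
/-- The pattern `231`. -/
def perm231 : Equiv.Perm (Fin 3) := ⟨![1, 2, 0], ![2, 0, 1], by decide, by decide⟩
/-- The pattern `2431`. -/
def perm2431 : Equiv.Perm (Fin 4) := ⟨![1, 3, 2, 0], ![3, 0, 2, 1], by decide, by decide⟩
/-- The pattern `4321`. -/
def perm4321 : Equiv.Perm (Fin 4) := ⟨![3, 2, 1, 0], ![3, 2, 1, 0], by decide, by decide⟩

/-- The pattern `(m+1) 1 2 … m` of length `m + 1`. -/
def sigmaM (m : ℕ) : Equiv.Perm (Fin (m + 1)) := (finRotate (m + 1))⁻¹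

/-- The pattern `p (p+1) 1 2 … (p-1)` of length `p + 1`. -/
def sigmaP (p : ℕ) : Equiv.Perm (Fin (p + 1)) := ((finRotate (p + 1))⁻¹) ^ 2

/-- The largest entry of `α` plays the role of `3` in an occurrence of the pattern
`231` : there are positions `a < b < c` with `α b` largest, `α a < α b` and `α c < α a`. -/
def MaxIn231 {n : ℕ} (α : Equiv.Perm (Fin n)) : Prop :=
  ∃ a b c : Fin n, a < b ∧ b < c ∧ (∀ x, α x ≤ α b) ∧ α a < α b ∧ α c < α a

/-- The last `p` entries of `α` are in decreasing order. -/
def LastDecreasing {n : ℕ} (α : Equiv.Perm (Fin n)) (p : ℕ) : Prop :=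
  ∀ a b : Fin n, n - p ≤ (a : ℕ) → a < b → α b < α a

open Classical in
/-- The color `d(α)` : it is `1` iff the largest entry of `α` plays the role of `3` in an
occurrence of `231` and the length-`p` suffix of `α` is not decreasing; otherwise `0`. -/
noncomputable def colorD {n : ℕ} (p : ℕ) (α : Equiv.Perm (Fin n)) : ℕ :=
  if MaxIn231 α ∧ ¬ LastDecreasing α p then 1 else 0

open Classical in
/-- The color used for `P = {312, 2431}` : it is `1` iff the largest entry of `α` plays
the role of `3` in an occurrence of `231`; otherwise `0`. -/
noncomputable def colorD2 {n : ℕ} (α : Equiv.Perm (Fin n)) : ℕ :=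
  if MaxIn231 α then 1 else 0

/-- A set `P` of forbidden patterns, all of the same length `L`, is
right-justified if and only if for each `τ ∈ P` for which `τ^←` exists (the largest
entry of `τ` is not in the first position), `τ^←` also belongs to `P`. -/
theorem rightJustified_iff_moveLeft_mem (P : PatternSet) (L : ℕ)
    (hL : ∀ τ ∈ P, τ.1 = L) :
    RightJustified P ↔
      ∀ (m : ℕ) (τ : Equiv.Perm (Fin (m + 1))),
        (⟨m + 1, τ⟩ : (k : ℕ) × Equiv.Perm (Fin k)) ∈ P → maxPos τ ≠ 0 →
          (⟨m + 1, moveLeft τ⟩ : (k : ℕ) × Equiv.Perm (Fin k)) ∈ P := by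
  constructor
  · -- right-justified implies closed under moveLeft
    intro hRJ m τ hτ h0
    by_contra hne
    have havoid : AvoidsSet (moveLeft τ) P := by
      rintro ⟨k, σ⟩ hσ hc
      have hk : k = m + 1 := (hL _ hσ).trans ((hL _ hτ).symm)
      subst hk
      exact hne (contains_eq hc ▸ hσ)
    set j := maxPos τ with hjdef
    have hτj : τ j = Fin.last m := τ.apply_symm_apply _
    have hml : moveLeft τ = τ * Equiv.swap j (j - 1) := rfl
    have hml1 : (moveLeft τ) (j - 1) = Fin.last m := by
      rw [hml, Equiv.Perm.mul_apply, Equiv.swap_apply_right, hτj]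
    have hmp : maxPos (moveLeft τ) = j - 1 := by
      unfold maxPos
      rw [Equiv.Perm.inv_eq_iff_eq]
      exact hml1.symm
    have hjv : 1 ≤ (j : ℕ) := by
      rcases Nat.eq_zero_or_pos (j : ℕ) with h | h
      · exact absurd (Fin.ext (h.trans (Fin.val_zero _).symm)) h0
      · exact h
    have hne_last : maxPos (moveLeft τ) ≠ Fin.last m := by
      rw [hmp]
      intro hEq
      have hv : ((j - 1 : Fin (m + 1)) : ℕ) = m := by rw [hEq, Fin.val_last]
      rw [Fin.coe_sub_one, if_neg h0] at hv
      have := j.isLt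
      omega
    have h2 := hRJ m (moveLeft τ) havoid hne_last
    have hmr : moveRight (moveLeft τ) = τ := by
      unfold moveRight
      rw [hmp, hml, sub_add_cancel, Equiv.swap_comm (j - 1) j, mul_assoc,
        Equiv.swap_mul_self, mul_one]
    rw [hmr] at h2
    exact h2 ⟨m + 1, τ⟩ hτ (contains_rfl τ)
  · -- closed under moveLeft implies right-justified
    intro hML n α hα hmax τp hτp hc
    obtain ⟨k, τ⟩ := τp
    replace hc : Contains τ (moveRight α) := hc
    obtain ⟨f, hf, hiff⟩ := hc
    set j := maxPos α with hjdef
    have hαj : α j = Fin.last n := α.apply_symm_apply _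
    have hjne : (j : ℕ) ≠ n := fun h => hmax (Fin.ext (h.trans (Fin.val_last n).symm))
    have hjlt : (j : ℕ) < n := lt_of_le_of_ne (Nat.lt_succ_iff.1 j.isLt) hjne
    have hj1 : ((j + 1 : Fin (n + 1)) : ℕ) = (j : ℕ) + 1 :=
      Fin.val_add_one_of_lt (by rw [Fin.lt_iff_val_lt_val, Fin.val_last]; exact hjlt)
    have hjlt1 : j < j + 1 := by rw [Fin.lt_def, hj1]; omega
    have hβ : ∀ x, moveRight α x = α (Equiv.swap j (j + 1) x) := fun x => rfl
    have hβj : moveRight α j = α (j + 1) := by rw [hβ, Equiv.swap_apply_left]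
    have hβj1 : moveRight α (j + 1) = Fin.last n := by
      rw [hβ, Equiv.swap_apply_right, hαj]
    have hβo : ∀ x, x ≠ j → x ≠ j + 1 → moveRight α x = α x := fun x h1 h2 => by
      rw [hβ, Equiv.swap_apply_of_ne_of_ne h1 h2]
    by_cases hbex : ∃ b, f b = j + 1
    · obtain ⟨b, hb⟩ := hbex
      by_cases haex : ∃ a, f a = j
      · -- Case D : both j and j+1 are hit
        obtain ⟨a, ha⟩ := haex
        have hab : a < b := hf.lt_iff_lt.1 (by rw [ha, hb]; exact hjlt1)
        have hk0 : 0 < k := b.pos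
        obtain ⟨m, rfl⟩ : ∃ m, k = m + 1 := ⟨k - 1, by omega⟩
        have hba : (b : ℕ) = (a : ℕ) + 1 := by
          have h1 : (a : ℕ) < (b : ℕ) := hab
          by_contra hne'
          have h2 : (a : ℕ) + 1 < (b : ℕ) := by omega
          have hblt : (b : ℕ) < m + 1 := b.isLt
          set c : Fin (m + 1) := ⟨(a : ℕ) + 1, by omega⟩ with hcdef
          have h3 := hf (show a < c by rw [Fin.lt_def]; simp [hcdef])
          have h4 := hf (show c < b by rw [Fin.lt_def]; exact h2)
          rw [ha, Fin.lt_def] at h3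
          rw [hb, Fin.lt_def, hj1] at h4
          omega
        have hmaxτ : ∀ x, x ≠ b → τ x < τ b := by
          intro x hx
          rw [hiff, hb, hβj1]
          have hfx : f x ≠ j + 1 := fun h => hx (hf.injective (h.trans hb.symm))
          have hne2 : moveRight α (f x) ≠ Fin.last n := fun hEq =>
            hfx ((moveRight α).injective (hEq.trans hβj1.symm))
          exact Fin.lt_last_iff_ne_last.2 hne2
        have hτb : τ b = Fin.last m := by
          by_contra hne'
          have h1 : τ⁻¹ (Fin.last m) ≠ b := fun h =>
            hne' (by rw [← h, Equiv.Perm.inv_def, Equiv.apply_symm_apply])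
          have h2 := hmaxτ _ h1
          rw [Equiv.Perm.inv_def, Equiv.apply_symm_apply] at h2
          exact absurd h2 (not_lt.2 (Fin.le_last _))
        have hmpτ : maxPos τ = b := by
          unfold maxPos; rw [Equiv.Perm.inv_eq_iff_eq]; exact hτb.symm
        have hb0 : b ≠ 0 := by
          intro h
          rw [Fin.ext_iff, Fin.val_zero] at h
          have := Fin.lt_def.1 hab
          omega
        have hmem := hML m τ hτp (hmpτ ▸ hb0)
        have hba1 : b - 1 = a := by
          have hEq : a + 1 = b := by
            apply Fin.ext
            rw [Fin.val_add_one_of_lt]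
            · omega
            · rw [Fin.lt_def, Fin.val_last]
              have : (b : ℕ) < m + 1 := b.isLt
              omega
          rw [← hEq, add_sub_cancel_right]
        have hMLτ : moveLeft τ = τ * Equiv.swap b a := by
          unfold moveLeft; rw [hmpτ, hba1]
        refine hα ⟨m + 1, moveLeft τ⟩ hmem ?_
        show Contains (moveLeft τ) α
        refine ⟨f, hf, ?_⟩
        have hval : ∀ x, α (f x) = moveRight α (f (Equiv.swap b a x)) := by
          intro x
          by_cases hxa : x = a
          · rw [hxa, Equiv.swap_apply_right, hb, hβj1, ha, hαj]
          · by_cases hxb : x = b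
            · rw [hxb, Equiv.swap_apply_left, ha, hβj, hb]
            · rw [Equiv.swap_apply_of_ne_of_ne hxb hxa,
                hβo (f x) (fun h => hxa (hf.injective (h.trans ha.symm)))
                  (fun h => hxb (hf.injective (h.trans hb.symm)))]
        intro x y
        rw [hMLτ, Equiv.Perm.mul_apply, Equiv.Perm.mul_apply, hval x, hval y]
        exact hiff _ _
      · -- Case B : j+1 hit, j not hit
        push_neg at haex
        refine hα ⟨k, τ⟩ hτp ?_
        show Contains τ α
        refine ⟨fun x => if x = b then j else f x, ?_, ?_⟩
        · intro x y hxy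
          by_cases hx : x = b
          · have hy : y ≠ b := fun h => by simp [hx, h] at hxy
            simp only [if_pos hx, if_neg hy]
            have h1 := hf hxy
            rw [hx, hb] at h1
            exact lt_trans hjlt1 h1
          · by_cases hy : y = b
            · simp only [if_neg hx, if_pos hy]
              have h1 := hf hxy
              rw [hy, hb, Fin.lt_def, hj1] at h1
              have h3 : (f x : ℕ) ≠ (j : ℕ) := fun h => haex x (Fin.ext h)
              rw [Fin.lt_def]
              omega
            · simp only [if_neg hx, if_neg hy]
              exact hf hxy
        · have hval : ∀ x, α (if x = b then j else f x) = moveRight α (f x) := by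
            intro x
            by_cases hx : x = b
            · rw [if_pos hx, hx, hb, hβj1, hαj]
            · rw [if_neg hx,
                hβo (f x) (haex x) (fun h => hx (hf.injective (h.trans hb.symm)))]
          exact fun x y => (hiff x y).trans (by rw [hval x, hval y])
    · by_cases haex : ∃ a, f a = j
      · -- Case C : j hit, j+1 not hit
        push_neg at hbex
        obtain ⟨a, ha⟩ := haex
        refine hα ⟨k, τ⟩ hτp ?_
        show Contains τ α
        refine ⟨fun x => if x = a then j + 1 else f x, ?_, ?_⟩
        · intro x y hxy
          by_cases hx : x = a
          · have hy : y ≠ a := fun h => by simp [hx, h] at hxy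
            simp only [if_pos hx, if_neg hy]
            have h1 := hf hxy
            rw [hx, ha, Fin.lt_def] at h1
            have h3 : (f y : ℕ) ≠ ((j + 1 : Fin (n + 1)) : ℕ) := fun h =>
              hbex y (Fin.ext h)
            rw [hj1] at h3
            rw [Fin.lt_def, hj1]
            omega
          · by_cases hy : y = a
            · simp only [if_neg hx, if_pos hy]
              have h1 := hf hxy
              rw [hy, ha] at h1
              exact lt_trans h1 hjlt1
            · simp only [if_neg hx, if_neg hy]
              exact hf hxy
        · have hval : ∀ x, α (if x = a then j + 1 else f x) = moveRight α (f x) := by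
            intro x
            by_cases hx : x = a
            · rw [if_pos hx, hx, ha, hβj]
            · rw [if_neg hx,
                hβo (f x) (fun h => hx (hf.injective (h.trans ha.symm))) (hbex x)]
          exact fun x y => (hiff x y).trans (by rw [hval x, hval y])
      · -- Case A : neither hit
        push_neg at hbex haex
        refine hα ⟨k, τ⟩ hτp ?_
        show Contains τ α
        refine ⟨f, hf, fun x y => (hiff x y).trans ?_⟩
        rw [hβo (f x) (haex x) (hbex x), hβo (f y) (haex y) (hbex y)]
end

section
/- Let p≥2 and P={312, 2431, δ} where δ is the length-(p+1) decreasing permutation (p+1)p...21. If α∈S_n(P), n≥1, has exactly k active sites, then α=λ^{↓k} or α=λ^{↓(k−1)} for some λ∈S_{n−1}(P). -/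
set_option maxHeartbeats 1000000


open Equiv

/-! ### Auxiliary development -/

section Aux

open Equiv

/-- The pattern set `{312, 2431, (p+1)p…21}`. -/
def Pset (p : ℕ) : PatternSet :=
  {⟨3, perm312⟩, ⟨4, perm2431⟩, ⟨p + 1, (Fin.revPerm : Equiv.Perm (Fin (p + 1)))⟩}

lemma mem312 (p : ℕ) : (⟨3, perm312⟩ : (k : ℕ) × Perm (Fin k)) ∈ Pset p :=
  Set.mem_insert _ _

lemma mem2431 (p : ℕ) : (⟨4, perm2431⟩ : (k : ℕ) × Perm (Fin k)) ∈ Pset p :=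
  Set.mem_insert_of_mem _ (Set.mem_insert _ _)

lemma memRev (p : ℕ) :
    (⟨p + 1, (Fin.revPerm : Perm (Fin (p + 1)))⟩ : (k : ℕ) × Perm (Fin k)) ∈ Pset p :=
  Set.mem_insert_of_mem _ (Set.mem_insert_of_mem _ rfl)

lemma mem_Pset_iff {p : ℕ} {τ : (k : ℕ) × Perm (Fin k)} (h : τ ∈ Pset p) :
    τ = ⟨3, perm312⟩ ∨ τ = ⟨4, perm2431⟩ ∨
      τ = ⟨p + 1, (Fin.revPerm : Perm (Fin (p + 1)))⟩ := by
  simpa [Pset, Set.mem_insert_iff, Set.mem_singleton_iff] using h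

lemma B_apply {n : ℕ} (m x : Fin (n+1)) :
    (Fin.revPerm * Fin.cycleRange (Fin.rev m) * Fin.revPerm : Perm (Fin (n+1))) x
      = if (x:ℕ) = (m:ℕ) then Fin.last n
        else if (x:ℕ) < (m:ℕ) then x else ⟨(x:ℕ)-1, by omega⟩ := by
  simp only [Perm.mul_apply, Fin.revPerm_apply]
  rcases lt_trichotomy (x:ℕ) (m:ℕ) with h | h | h
  · have hgt : Fin.rev m < Fin.rev x := by rw [Fin.rev_lt_rev]; exact h
    rw [Fin.cycleRange_of_gt hgt, Fin.rev_rev, if_neg (Nat.ne_of_lt h), if_pos h]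
  · have : x = m := Fin.ext h
    subst this
    rw [Fin.cycleRange_self, if_pos rfl]
    apply Fin.ext
    rw [Fin.val_rev, Fin.val_last]
    simp
  · have hlt : Fin.rev x < Fin.rev m := by rw [Fin.rev_lt_rev]; exact h
    rw [Fin.cycleRange_of_lt hlt, if_neg (Nat.ne_of_gt h), if_neg (not_lt.mpr h.le)]
    have hxv : (Fin.rev x : ℕ) = n - x := by rw [Fin.val_rev]; omega
    have hadd : ((Fin.rev x + 1 : Fin (n+1)) : ℕ) = n - x + 1 := by
      rw [Fin.val_add_one_of_lt]
      · rw [hxv]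
      · rw [Fin.lt_iff_val_lt_val, hxv, Fin.val_last]; omega
    apply Fin.ext
    rw [Fin.val_rev, hadd]
    simp only [Fin.val_mk]
    have hx1 : (x:ℕ) < n+1 := x.isLt
    omega

lemma A_castSucc {n : ℕ} (lam : Perm (Fin n)) (y : Fin n) :
    (finSuccEquivLast.permCongr.symm (optionCongr lam)) (Fin.castSucc y)
      = Fin.castSucc (lam y) := by
  simp [Equiv.permCongr_symm, Equiv.permCongr_apply]

lemma A_last {n : ℕ} (lam : Perm (Fin n)) :
    (finSuccEquivLast.permCongr.symm (optionCongr lam)) (Fin.last n) = Fin.last n := by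
  simp [Equiv.permCongr_symm, Equiv.permCongr_apply]

lemma insertMax_apply {n : ℕ} (lam : Perm (Fin n)) (i : ℕ) (x : Fin (n+1)) :
    insertMax lam i x = if hx : (x:ℕ) = n - (i-1) then Fin.last n
    else if h : (x:ℕ) < n - (i-1) then (lam ⟨x, by omega⟩).castSucc
    else (lam ⟨(x:ℕ)-1, by omega⟩).castSucc := by
  rw [insertMax, Perm.mul_apply, B_apply]
  simp only [Fin.val_mk]
  rcases lt_trichotomy (x:ℕ) (n - (i-1)) with h | h | h
  · rw [if_neg (Nat.ne_of_lt h), if_pos h, dif_neg (Nat.ne_of_lt h), dif_pos h]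
    have hx : x = Fin.castSucc ⟨x, by omega⟩ := by simp [Fin.ext_iff]
    conv_lhs => rw [hx]
    exact A_castSucc lam _
  · rw [if_pos h, dif_pos h]
    exact A_last lam
  · rw [if_neg (Nat.ne_of_gt h), if_neg (not_lt.mpr h.le),
      dif_neg (Nat.ne_of_gt h), dif_neg (not_lt.mpr h.le)]
    have hx : (⟨(x:ℕ)-1, by omega⟩ : Fin (n+1)) = Fin.castSucc ⟨(x:ℕ)-1, by omega⟩ := by
      simp [Fin.ext_iff]
    rw [hx]
    exact A_castSucc lam _

lemma insertMax_apply_of_eq {n : ℕ} (lam : Perm (Fin n)) (i : ℕ) {x : Fin (n+1)}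
    (h : (x:ℕ) = n - (i-1)) : insertMax lam i x = Fin.last n := by
  rw [insertMax_apply, dif_pos h]

lemma insertMax_apply_of_lt {n : ℕ} (lam : Perm (Fin n)) (i : ℕ) {x : Fin (n+1)} {y : Fin n}
    (h : (x:ℕ) < n - (i-1)) (hy : (y:ℕ) = (x:ℕ)) :
    insertMax lam i x = (lam y).castSucc := by
  rw [insertMax_apply, dif_neg (by omega), dif_pos h]
  congr 1
  exact congrArg lam (Fin.ext (by simp [hy]))

lemma insertMax_apply_of_gt {n : ℕ} (lam : Perm (Fin n)) (i : ℕ) {x : Fin (n+1)} {y : Fin n}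
    (h : n - (i-1) < (x:ℕ)) (hy : (y:ℕ) + 1 = (x:ℕ)) :
    insertMax lam i x = (lam y).castSucc := by
  rw [insertMax_apply, dif_neg (by omega), dif_neg (by omega)]
  congr 1
  exact congrArg lam (Fin.ext (by simp; omega))

/-- `α = insertMax (deleteMax α) (n+1 - maxPos α)`. -/
lemma insertMax_deleteMax {n : ℕ} (α : Perm (Fin (n+1))) :
    α = insertMax (deleteMax α) (n + 1 - (maxPos α : ℕ)) := by
  set m : Fin (n+1) := maxPos α with hm
  set B : Perm (Fin (n+1)) :=
    Fin.revPerm * Fin.cycleRange (Fin.rev m) * Fin.revPerm with hB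
  have hBm : B m = Fin.last n := by rw [hB, B_apply]; simp
  have hBinv : B⁻¹ (Fin.last n) = m := by
    rw [Perm.inv_eq_iff_eq]; exact hBm.symm
  have hαm : α m = Fin.last n := by
    rw [hm, maxPos]; simp
  set σ : Perm (Fin (n+1)) := α * B⁻¹ with hσ
  set E := finSuccEquivLast.permCongr σ with hE
  have hEnone : E none = none := by
    rw [hE]
    simp only [permCongr_apply, finSuccEquivLast_symm_none]
    rw [hσ, Perm.mul_apply, hBinv, hαm, finSuccEquivLast_last]
  have hEopt : E = (deleteMax α).optionCongr := by
    apply Equiv.ext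
    intro x
    cases x with
    | none => rw [hEnone]; simp
    | some y =>
      have hne : E (some y) ≠ none := by
        intro hcon
        rw [← hEnone] at hcon
        exact (Option.some_ne_none y) (E.injective hcon)
      obtain ⟨z, hz⟩ := Option.ne_none_iff_exists'.mp hne
      have : some ((Equiv.removeNone E) y) = E (some y) :=
        Equiv.removeNone_some E ⟨z, hz⟩
      rw [deleteMax, ← hE, ← this]
      simp [hEnone]
      exact this
  have hσ' : σ = finSuccEquivLast.permCongr.symm ((deleteMax α).optionCongr) := by
    rw [← hEopt, hE, Equiv.symm_apply_apply]
  have hmsite : (⟨n - (n + 1 - (m:ℕ) - 1), by omega⟩ : Fin (n+1)) = m := by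
    apply Fin.ext
    have : (m:ℕ) < n + 1 := m.isLt
    simp only [Fin.val_mk]
    omega
  calc α = σ * B := by rw [hσ]; group
    _ = insertMax (deleteMax α) (n + 1 - (m:ℕ)) := by
        rw [insertMax, ← hσ', hmsite, ← hB]

/-- Transfer 1 : a pattern occurring in `lam` occurs in `insertMax lam i`. -/
lemma contains_insertMax {n k : ℕ} {τ : Perm (Fin k)} {lam : Perm (Fin n)}
    (i : ℕ) (h : Contains τ lam) : Contains τ (insertMax lam i) := by
  obtain ⟨f, hf, hiso⟩ := h
  refine ⟨fun x => ⟨if (f x : ℕ) < n - (i-1) then (f x : ℕ) else (f x : ℕ) + 1,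
      by have := (f x).isLt; split <;> omega⟩, ?_, ?_⟩
  · intro a b hab
    have h1 := hf hab
    rw [Fin.lt_iff_val_lt_val] at h1 ⊢
    simp only [Fin.val_mk]
    split <;> split <;> omega
  · have hval : ∀ c : Fin k, insertMax lam i
        (⟨if (f c : ℕ) < n - (i-1) then (f c : ℕ) else (f c : ℕ) + 1,
          by have := (f c).isLt; split <;> omega⟩ : Fin (n+1)) = (lam (f c)).castSucc := by
      intro c
      by_cases hc : (f c : ℕ) < n - (i-1)
      · exact insertMax_apply_of_lt lam i (by simp [hc]) (by simp [hc])
      · exact insertMax_apply_of_gt lam i (by simp [hc]; omega) (by simp [hc])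
    intro a b
    rw [hiso a b, hval a, hval b, Fin.castSucc_lt_castSucc_iff]

/-- Transfer 2 : an occurrence in `insertMax lam i` not using the new-max position
gives an occurrence in `lam`. -/
lemma contains_of_insertMax_off {n k : ℕ} {τ : Perm (Fin k)} {lam : Perm (Fin n)}
    {i : ℕ} (f : Fin k → Fin (n+1)) (hf : StrictMono f)
    (hiso : ∀ a b, τ a < τ b ↔ insertMax lam i (f a) < insertMax lam i (f b))
    (hoff : ∀ b, (f b : ℕ) ≠ n - (i-1)) : Contains τ lam := by
  refine ⟨fun x => ⟨if (f x : ℕ) < n - (i-1) then (f x : ℕ) else (f x : ℕ) - 1,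
      by have := (f x).isLt; have := hoff x; split <;> omega⟩, ?_, ?_⟩
  · intro a b hab
    have h1 := hf hab
    rw [Fin.lt_iff_val_lt_val] at h1 ⊢
    simp only [Fin.val_mk]
    have := hoff a; have := hoff b
    split <;> split <;> omega
  · have hval : ∀ c : Fin k, insertMax lam i (f c) = (lam
        (⟨if (f c : ℕ) < n - (i-1) then (f c : ℕ) else (f c : ℕ) - 1,
          by have := (f c).isLt; have := hoff c; split <;> omega⟩ : Fin n)).castSucc := by
      intro c
      by_cases hc : (f c : ℕ) < n - (i-1)
      · exact insertMax_apply_of_lt lam i hc (by simp [hc])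
      · have h1 : n - (i-1) < (f c:ℕ) := by have := hoff c; omega
        exact insertMax_apply_of_gt lam i h1 (by simp [hc]; have := hoff c; omega)
    intro a b
    rw [hiso a b, hval a, hval b, Fin.castSucc_lt_castSucc_iff]

/-- Helper : replace the occurrence function keeping values. -/
lemma contains_of_eqOn {k n : ℕ} {τ : Perm (Fin k)} {π π' : Perm (Fin n)}
    {f : Fin k → Fin n} (f' : Fin k → Fin n) (hf' : StrictMono f')
    (heq : ∀ c, π' (f' c) = π (f c))
    (hiso : ∀ a b, τ a < τ b ↔ π (f a) < π (f b)) : Contains τ π' :=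
  ⟨f', hf', fun a b => by rw [heq, heq]; exact hiso a b⟩

lemma contains312_of {n : ℕ} (π : Perm (Fin n)) {a b c : Fin n}
    (hab : a < b) (hbc : b < c) (h1 : π b < π c) (h2 : π c < π a) :
    Contains perm312 π := by
  refine ⟨![a, b, c], ?_, ?_⟩
  · intro x y hxy
    fin_cases x <;> fin_cases y <;>
      simp only [Matrix.cons_val_zero, Matrix.cons_val_one, Matrix.head_cons,
        Matrix.cons_val_two, Matrix.tail_cons] <;>
      first
        | exact absurd hxy (by decide)
        | exact hab | exact hbc | exact hab.trans hbc
  · intro x y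
    fin_cases x <;> fin_cases y <;>
      simp only [Matrix.cons_val_zero, Matrix.cons_val_one, Matrix.head_cons,
        Matrix.cons_val_two, Matrix.tail_cons] <;>
      first
        | exact iff_of_false (by decide) (lt_irrefl _)
        | exact iff_of_false (by decide) (h1.trans h2).asymm
        | exact iff_of_false (by decide) h1.asymm
        | exact iff_of_false (by decide) h2.asymm
        | exact iff_of_true (by decide) h1
        | exact iff_of_true (by decide) h2
        | exact iff_of_true (by decide) (h1.trans h2)

lemma contains2431_of {n : ℕ} (π : Perm (Fin n)) {a b c d : Fin n}
    (hab : a < b) (hbc : b < c) (hcd : c < d)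
    (h1 : π d < π a) (h2 : π a < π c) (h3 : π c < π b) :
    Contains perm2431 π := by
  refine ⟨![a, b, c, d], ?_, ?_⟩
  · intro x y hxy
    fin_cases x <;> fin_cases y <;>
      simp only [Matrix.cons_val_zero, Matrix.cons_val_one, Matrix.head_cons,
        Matrix.cons_val_two, Matrix.tail_cons, Matrix.cons_val_three] <;>
      first
        | exact absurd hxy (by decide)
        | exact hab | exact hbc | exact hcd
        | exact hab.trans hbc | exact hbc.trans hcd | exact (hab.trans hbc).trans hcd
  · intro x y
    fin_cases x <;> fin_cases y <;>
      simp only [Matrix.cons_val_zero, Matrix.cons_val_one, Matrix.head_cons,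
        Matrix.cons_val_two, Matrix.tail_cons, Matrix.cons_val_three] <;>
      first
        | exact iff_of_false (by decide) (lt_irrefl _)
        | exact iff_of_true (by decide) h1
        | exact iff_of_true (by decide) h2
        | exact iff_of_true (by decide) h3
        | exact iff_of_true (by decide) (h1.trans h2)
        | exact iff_of_true (by decide) (h2.trans h3)
        | exact iff_of_true (by decide) ((h1.trans h2).trans h3)
        | exact iff_of_false (by decide) h1.asymm
        | exact iff_of_false (by decide) h2.asymm
        | exact iff_of_false (by decide) h3.asymm
        | exact iff_of_false (by decide) (h1.trans h2).asymm
        | exact iff_of_false (by decide) (h2.trans h3).asymm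
        | exact iff_of_false (by decide) ((h1.trans h2).trans h3).asymm

lemma containsRev_of {n p : ℕ} (π : Perm (Fin n)) (g : Fin (p+1) → Fin n)
    (hg : StrictMono g) (hdec : ∀ a b : Fin (p+1), a < b → π (g b) < π (g a)) :
    Contains (Fin.revPerm : Perm (Fin (p+1))) π := by
  refine ⟨g, hg, fun x y => ?_⟩
  rw [Fin.revPerm_apply, Fin.revPerm_apply, Fin.rev_lt_rev]
  constructor
  · exact fun h => hdec y x h
  · intro h
    rcases lt_trichotomy x y with h' | h' | h'
    · exact absurd (hdec x y h') h.asymm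
    · subst h'; exact absurd h (lt_irrefl _)
    · exact h'

lemma contains312_of' {n : ℕ} (π : Perm (Fin n)) {a b c : Fin n}
    (hab : (a:ℕ) < (b:ℕ)) (hbc : (b:ℕ) < (c:ℕ)) {va vb vc : Fin n}
    (ha : π a = va) (hb : π b = vb) (hc : π c = vc)
    (h1 : vb < vc) (h2 : vc < va) : Contains perm312 π := by
  subst ha; subst hb; subst hc
  exact contains312_of π (a := a) (b := b) (c := c)
    (by rw [Fin.lt_iff_val_lt_val]; exact hab)
    (by rw [Fin.lt_iff_val_lt_val]; exact hbc) h1 h2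

lemma contains2431_of' {n : ℕ} (π : Perm (Fin n)) {a b c d : Fin n}
    (hab : (a:ℕ) < (b:ℕ)) (hbc : (b:ℕ) < (c:ℕ)) (hcd : (c:ℕ) < (d:ℕ))
    {va vb vc vd : Fin n}
    (ha : π a = va) (hb : π b = vb) (hc : π c = vc) (hd : π d = vd)
    (h1 : vd < va) (h2 : va < vc) (h3 : vc < vb) : Contains perm2431 π := by
  subst ha; subst hb; subst hc; subst hd
  exact contains2431_of π (a := a) (b := b) (c := c) (d := d)
    (by rw [Fin.lt_iff_val_lt_val]; exact hab)
    (by rw [Fin.lt_iff_val_lt_val]; exact hbc)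
    (by rw [Fin.lt_iff_val_lt_val]; exact hcd) h1 h2 h3

/-- C2 : if site `i+1` is active then site `i` is active (`1 ≤ i ≤ n+1`). -/
lemma activeStep (p : ℕ) {n : ℕ} (i : ℕ) (hi1 : 1 ≤ i) (hi2 : i ≤ n+1)
    (α : Perm (Fin (n+1)))
    (h' : AvoidsSet (insertMax α (i+1)) (Pset p)) :
    AvoidsSet (insertMax α i) (Pset p) := by
  set m' := n + 1 - i with hm'
  have hM : (n+1) - (i-1) = m' + 1 := by omega
  have hM' : (n+1) - ((i+1)-1) = m' := by omega
  intro τ hτ hcont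
  obtain ⟨f, hf, hiso⟩ := hcont
  -- value helpers for π = insertMax α i
  have hvlt : ∀ c, ∀ hc : (f c : ℕ) < m' + 1, insertMax α i (f c)
      = (α ⟨(f c : ℕ), by omega⟩).castSucc := fun c hc =>
    insertMax_apply_of_lt α i (by omega) (by simp only [Fin.val_mk])
  have hvgt : ∀ c, ∀ hc : m' + 1 < (f c : ℕ), insertMax α i (f c)
      = (α ⟨(f c : ℕ) - 1, by have := (f c).isLt; omega⟩).castSucc := fun c hc =>
    insertMax_apply_of_gt α i (by omega) (by simp only [Fin.val_mk]; omega)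
  -- value helpers for π' = insertMax α (i+1)
  have hvlt' : ∀ x : Fin (n+2), (x : ℕ) < m' → ∀ y : Fin (n+1), (y:ℕ) = (x:ℕ) →
      insertMax α (i+1) x = (α y).castSucc := fun x hx y hy =>
    insertMax_apply_of_lt α (i+1) (by omega) hy
  have hvgt' : ∀ x : Fin (n+2), m' < (x : ℕ) → ∀ y : Fin (n+1), (y:ℕ) + 1 = (x:ℕ) →
      insertMax α (i+1) x = (α y).castSucc := fun x hx y hy =>
    insertMax_apply_of_gt α (i+1) (by omega) hy
  by_cases hA : ∃ a, (f a : ℕ) = m'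
  case neg =>
    by_cases hB : ∃ b, (f b : ℕ) = m' + 1
    case neg =>
      push_neg at hA hB
      refine h' τ hτ (contains_of_eqOn f hf (fun c => ?_) hiso)
      rcases lt_trichotomy ((f c : ℕ)) m' with h | h | h
      · rw [hvlt' (f c) h ⟨(f c : ℕ), by omega⟩ rfl, hvlt c (by omega)]
      · exact absurd h (hA c)
      · have h2 : m' + 1 < (f c : ℕ) := lt_of_le_of_ne h (Ne.symm (hB c))
        rw [hvgt' (f c) h ⟨(f c : ℕ) - 1, by have := (f c).isLt; omega⟩
          (by simp only [Fin.val_mk]; omega), hvgt c h2]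
    case pos =>
      obtain ⟨b, hb⟩ := hB
      push_neg at hA
      set f'' : _ → Fin (n+2) := fun c =>
        if c = b then (⟨m', by omega⟩ : Fin (n+2)) else f c with hf''
      have hmono : StrictMono f'' := by
        intro x y hxy
        rw [hf'']
        dsimp only
        by_cases hx : x = b
        · subst hx
          rw [if_pos rfl, if_neg (by intro hcon; subst hcon; exact absurd hxy (lt_irrefl _)),
            Fin.lt_iff_val_lt_val]
          simp only [Fin.val_mk]
          have h1 := hf hxy
          rw [Fin.lt_iff_val_lt_val, hb] at h1
          omega
        · rw [if_neg hx]
          by_cases hy : y = b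
          · subst hy
            rw [if_pos rfl, Fin.lt_iff_val_lt_val]
            simp only [Fin.val_mk]
            have h1 := hf hxy
            rw [Fin.lt_iff_val_lt_val, hb] at h1
            have h2 := hA x
            omega
          · rw [if_neg hy]
            exact hf hxy
      refine h' τ hτ (contains_of_eqOn f'' hmono (fun c => ?_) hiso)
      rw [hf'']
      dsimp only
      by_cases hc : c = b
      · subst hc
        rw [if_pos rfl,
          insertMax_apply_of_eq α (i+1) (by simp only [Fin.val_mk]; omega),
          insertMax_apply_of_eq α i (by omega)]
      · rw [if_neg hc]
        have hc1 : (f c : ℕ) ≠ m' := hA c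
        have hc2 : (f c : ℕ) ≠ m' + 1 := by
          intro hcon
          exact hc (hf.injective (Fin.ext (hcon.trans hb.symm)))
        rcases lt_trichotomy ((f c : ℕ)) m' with h | h | h
        · rw [hvlt' (f c) h ⟨(f c : ℕ), by omega⟩ rfl, hvlt c (by omega)]
        · exact absurd h hc1
        · have h2 : m' + 1 < (f c : ℕ) := by omega
          rw [hvgt' (f c) h ⟨(f c : ℕ) - 1, by have := (f c).isLt; omega⟩
            (by simp only [Fin.val_mk]; omega), hvgt c h2]
  case pos =>
    obtain ⟨a, ha⟩ := hA
    by_cases hB : ∃ b, (f b : ℕ) = m' + 1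
    case neg =>
      push_neg at hB
      set f'' : _ → Fin (n+2) := fun c =>
        if c = a then (⟨m' + 1, by omega⟩ : Fin (n+2)) else f c with hf''
      have hmono : StrictMono f'' := by
        intro x y hxy
        rw [hf'']
        dsimp only
        by_cases hx : x = a
        · subst hx
          rw [if_pos rfl, if_neg (by intro hcon; subst hcon; exact absurd hxy (lt_irrefl _)),
            Fin.lt_iff_val_lt_val]
          simp only [Fin.val_mk]
          have h1 := hf hxy
          rw [Fin.lt_iff_val_lt_val, ha] at h1
          have h2 := hB y
          omega
        · rw [if_neg hx]
          by_cases hy : y = a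
          · subst hy
            rw [if_pos rfl, Fin.lt_iff_val_lt_val]
            simp only [Fin.val_mk]
            have h1 := hf hxy
            rw [Fin.lt_iff_val_lt_val, ha] at h1
            omega
          · rw [if_neg hy]
            exact hf hxy
      refine h' τ hτ (contains_of_eqOn f'' hmono (fun c => ?_) hiso)
      rw [hf'']
      dsimp only
      by_cases hc : c = a
      · subst hc
        rw [if_pos rfl,
          hvgt' ⟨m'+1, by omega⟩ (by simp only [Fin.val_mk]; omega)
            ⟨m', by omega⟩ (by simp only [Fin.val_mk]),
          hvlt c (by omega)]
        congr 2
        exact Fin.ext (by simp only [Fin.val_mk]; omega)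
      · rw [if_neg hc]
        have hc1 : (f c : ℕ) ≠ m' := by
          intro hcon
          exact hc (hf.injective (Fin.ext (hcon.trans ha.symm)))
        have hc2 : (f c : ℕ) ≠ m' + 1 := hB c
        rcases lt_trichotomy ((f c : ℕ)) m' with h | h | h
        · rw [hvlt' (f c) h ⟨(f c : ℕ), by omega⟩ rfl, hvlt c (by omega)]
        · exact absurd h hc1
        · have h2 : m' + 1 < (f c : ℕ) := by omega
          rw [hvgt' (f c) h ⟨(f c : ℕ) - 1, by have := (f c).isLt; omega⟩
            (by simp only [Fin.val_mk]; omega), hvgt c h2]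
    case pos =>
      obtain ⟨b, hb⟩ := hB
      have hab : a < b := by
        have : f a < f b := by
          rw [Fin.lt_iff_val_lt_val, ha, hb]; omega
        exact hf.lt_iff_lt.mp this
      have hmaxval : insertMax α i (f b) = Fin.last (n+1) :=
        insertMax_apply_of_eq α i (by omega)
      have hall : ∀ c, c ≠ b → τ.2 c < τ.2 b := by
        intro c hc
        refine (hiso c b).mpr (lt_of_le_of_ne ?_ ?_)
        · rw [hmaxval]; exact Fin.le_last _
        · intro h
          exact hc (hf.injective ((insertMax α i).injective h))
      rcases mem_Pset_iff hτ with rfl | rfl | rfl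
      · have hb0 : b = 0 := by
          fin_cases b
          · rfl
          · exact absurd (hall 0 (by decide)) (by decide)
          · exact absurd (hall 0 (by decide)) (by decide)
        subst hb0
        simp at hab
      · have hb1 : b = 1 := by
          fin_cases b
          · exact absurd (hall 1 (by decide)) (by decide)
          · rfl
          · exact absurd (hall 1 (by decide)) (by decide)
          · exact absurd (hall 1 (by decide)) (by decide)
        subst hb1
        have ha0 : a = 0 := by
          fin_cases a
          · rfl
          · exact absurd hab (by decide)
          · exact absurd hab (by decide)
          · exact absurd hab (by decide)
        subst ha0
        -- build a 312 occurrence in insertMax α (i+1)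
        have hf12 := hf (show (1 : Fin 4) < 2 by decide)
        rw [Fin.lt_iff_val_lt_val, hb] at hf12
        have h02 := (hiso 0 2).mp (by decide)
        rw [hvlt 0 (by omega), hvgt 2 (by omega), Fin.castSucc_lt_castSucc_iff] at h02
        have hva : insertMax α (i+1) (⟨m', by omega⟩ : Fin (n+2)) = Fin.last (n+1) :=
          insertMax_apply_of_eq α (i+1) (by simp only [Fin.val_mk]; omega)
        have hvb : insertMax α (i+1) (⟨m' + 1, by omega⟩ : Fin (n+2))
            = (α ⟨(f 0 : ℕ), by omega⟩).castSucc :=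
          hvgt' _ (by simp only [Fin.val_mk]; omega) _ (by simp only [Fin.val_mk]; omega)
        have hvc : insertMax α (i+1) (f 2)
            = (α ⟨(f 2 : ℕ) - 1, by have := (f 2).isLt; omega⟩).castSucc :=
          hvgt' _ (by omega) _ (by simp only [Fin.val_mk]; omega)
        exact h' ⟨3, perm312⟩ (mem312 p) (contains312_of' _
          (a := ⟨m', by omega⟩) (b := ⟨m' + 1, by omega⟩) (c := f 2)
          (by simp only [Fin.val_mk]; omega) (by simp only [Fin.val_mk]; omega)
          hva hvb hvc (Fin.castSucc_lt_castSucc_iff.mpr h02) (Fin.castSucc_lt_last _))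
      · have hb0 : b = 0 := by
          by_contra hbne
          have h0 : Fin.revPerm (0 : Fin (p+1)) < Fin.revPerm b :=
            hall 0 (fun h => hbne h.symm)
          rw [Fin.revPerm_apply, Fin.revPerm_apply] at h0
          have : Fin.rev (0 : Fin (p+1)) = Fin.last p := by
            apply Fin.ext
            rw [Fin.val_rev, Fin.val_last]
            simp
          rw [this] at h0
          exact absurd h0 (not_lt_of_ge (Fin.le_last _))
        subst hb0
        simp at hab

/-- C3 : any active site is at most `(n+1 - maxPos α) + 1`. -/
lemma activeBound (p : ℕ) {n : ℕ} (i : ℕ) (α : Perm (Fin (n+1)))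
    (hi2 : i ≤ n + 2) (hgt : n + 1 - (maxPos α : ℕ) + 2 ≤ i)
    (hav : AvoidsSet (insertMax α i) (Pset p)) : False := by
  set mv := (maxPos α : ℕ) with hmv
  have hmvlt : mv < n + 1 := (maxPos α).isLt
  have hmv1 : 1 ≤ mv := by omega
  set M := (n + 1) - (i - 1) with hM
  have hMlt : M + 1 ≤ mv := by omega
  have hαm : α ⟨mv, hmvlt⟩ = Fin.last n := by
    have h1 : (⟨mv, hmvlt⟩ : Fin (n+1)) = maxPos α := Fin.ext rfl
    rw [h1, maxPos]
    exact α.apply_symm_apply _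
  have hva : insertMax α i (⟨M, by omega⟩ : Fin (n+2)) = Fin.last (n+1) :=
    insertMax_apply_of_eq α i (by simp only [Fin.val_mk]; omega)
  have hvb : insertMax α i (⟨M + 1, by omega⟩ : Fin (n+2))
      = (α ⟨M, by omega⟩).castSucc :=
    insertMax_apply_of_gt α i (by simp only [Fin.val_mk]; omega)
      (by simp only [Fin.val_mk])
  have hvc : insertMax α i (⟨mv + 1, by omega⟩ : Fin (n+2))
      = (α ⟨mv, hmvlt⟩).castSucc :=
    insertMax_apply_of_gt α i (by simp only [Fin.val_mk]; omega)
      (by simp only [Fin.val_mk])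
  have hne : α ⟨M, by omega⟩ < Fin.last n := by
    refine lt_of_le_of_ne (Fin.le_last _) ?_
    intro h
    have h2 : (⟨M, by omega⟩ : Fin (n+1)) = ⟨mv, hmvlt⟩ := α.injective (h.trans hαm.symm)
    rw [Fin.ext_iff] at h2
    simp only [Fin.val_mk] at h2
    omega
  exact hav ⟨3, perm312⟩ (mem312 p) (contains312_of' _
    (a := ⟨M, by omega⟩) (b := ⟨M + 1, by omega⟩) (c := ⟨mv + 1, by omega⟩)
    (by simp only [Fin.val_mk]; omega) (by simp only [Fin.val_mk]; omega)
    hva hvb (hvc.trans (congrArg Fin.castSucc hαm))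
    (Fin.castSucc_lt_castSucc_iff.mpr hne) (Fin.castSucc_lt_last _))

/-- C4 : the site just right of the maximum is active. -/
lemma siteJActive (p : ℕ) {n : ℕ} (α : Perm (Fin (n+1)))
    (hα : AvoidsSet α (Pset p)) :
    AvoidsSet (insertMax α (n + 1 - (maxPos α : ℕ))) (Pset p) := by
  set mv := (maxPos α : ℕ) with hmv
  have hmvlt : mv < n + 1 := (maxPos α).isLt
  set j := n + 1 - mv with hj
  have hM : (n + 1) - (j - 1) = mv + 1 := by omega
  have hαm : α ⟨mv, hmvlt⟩ = Fin.last n := by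
    have h1 : (⟨mv, hmvlt⟩ : Fin (n+1)) = maxPos α := Fin.ext rfl
    rw [h1, maxPos]
    exact α.apply_symm_apply _
  intro τ hτ hcont
  rcases mem_Pset_iff hτ with rfl | rfl | rfl
  · -- 312
    obtain ⟨f, hf, hiso⟩ : Contains perm312 (insertMax α j) := hcont
    by_cases hex : ∃ b, (f b : ℕ) = mv + 1
    case neg =>
      push_neg at hex
      refine hα ⟨3, perm312⟩ (mem312 p)
        (contains_of_insertMax_off f hf hiso ?_)
      intro b; rw [hM]; exact hex b
    case pos =>
    obtain ⟨b, hfb⟩ := hex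
    have hmaxval : insertMax α j (f b) = Fin.last (n+1) :=
      insertMax_apply_of_eq α j (by omega)
    have hall : ∀ c, c ≠ b → perm312 c < perm312 b := by
      intro c hc
      refine (hiso c b).mpr (lt_of_le_of_ne ?_ ?_)
      · rw [hmaxval]; exact Fin.le_last _
      · intro h
        exact hc (hf.injective ((insertMax α j).injective h))
    have hvgt : ∀ c : Fin 3, ∀ hc : mv + 1 < (f c : ℕ), insertMax α j (f c)
        = (α ⟨(f c : ℕ) - 1, by have := (f c).isLt; omega⟩).castSucc := fun c hc =>
      insertMax_apply_of_gt α j (by omega) (by simp only [Fin.val_mk]; omega)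
    have hb0 : b = 0 := by
      fin_cases b
      · rfl
      · exact absurd (hall 0 (by decide)) (by decide)
      · exact absurd (hall 0 (by decide)) (by decide)
    subst hb0
    have h01 := hf (show (0 : Fin 3) < 1 by decide)
    have h12 := hf (show (1 : Fin 3) < 2 by decide)
    rw [Fin.lt_iff_val_lt_val] at h01 h12
    rw [hfb] at h01
    clear hmaxval
    have hlt12 := (hiso 1 2).mp (by decide)
    rw [hvgt 1 h01, hvgt 2 (h01.trans h12), Fin.castSucc_lt_castSucc_iff] at hlt12
    have hne : α ⟨(f 2 : ℕ) - 1, by have := (f 2).isLt; omega⟩ < Fin.last n := by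
      refine lt_of_le_of_ne (Fin.le_last _) ?_
      intro h
      have h2 := α.injective (h.trans hαm.symm)
      rw [Fin.ext_iff] at h2
      simp only [Fin.val_mk] at h2
      omega
    exact hα ⟨3, perm312⟩ (mem312 p) (contains312_of' α
      (a := ⟨mv, hmvlt⟩) (b := ⟨(f 1 : ℕ) - 1, by have := (f 1).isLt; omega⟩)
      (c := ⟨(f 2 : ℕ) - 1, by have := (f 2).isLt; omega⟩)
      (by simp only [Fin.val_mk]; omega) (by simp only [Fin.val_mk]; omega)
      hαm rfl rfl hlt12 hne)
  · -- 2431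
    obtain ⟨f, hf, hiso⟩ : Contains perm2431 (insertMax α j) := hcont
    by_cases hex : ∃ b, (f b : ℕ) = mv + 1
    case neg =>
      push_neg at hex
      refine hα ⟨4, perm2431⟩ (mem2431 p)
        (contains_of_insertMax_off f hf hiso ?_)
      intro b; rw [hM]; exact hex b
    case pos =>
    obtain ⟨b, hfb⟩ := hex
    have hmaxval : insertMax α j (f b) = Fin.last (n+1) :=
      insertMax_apply_of_eq α j (by omega)
    have hall : ∀ c, c ≠ b → perm2431 c < perm2431 b := by
      intro c hc
      refine (hiso c b).mpr (lt_of_le_of_ne ?_ ?_)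
      · rw [hmaxval]; exact Fin.le_last _
      · intro h
        exact hc (hf.injective ((insertMax α j).injective h))
    have hvlt : ∀ c : Fin 4, ∀ hc : (f c : ℕ) < mv + 1, insertMax α j (f c)
        = (α ⟨(f c : ℕ), by omega⟩).castSucc := fun c hc =>
      insertMax_apply_of_lt α j (by omega) (by simp only [Fin.val_mk])
    have hvgt : ∀ c : Fin 4, ∀ hc : mv + 1 < (f c : ℕ), insertMax α j (f c)
        = (α ⟨(f c : ℕ) - 1, by have := (f c).isLt; omega⟩).castSucc := fun c hc =>
      insertMax_apply_of_gt α j (by omega) (by simp only [Fin.val_mk]; omega)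
    have hb1 : b = 1 := by
      fin_cases b
      · exact absurd (hall 1 (by decide)) (by decide)
      · rfl
      · exact absurd (hall 1 (by decide)) (by decide)
      · exact absurd (hall 1 (by decide)) (by decide)
    subst hb1
    have h01 := hf (show (0 : Fin 4) < 1 by decide)
    have h12 := hf (show (1 : Fin 4) < 2 by decide)
    have h23 := hf (show (2 : Fin 4) < 3 by decide)
    rw [Fin.lt_iff_val_lt_val] at h01 h12 h23
    rw [hfb] at h01 h12
    clear hmaxval
    have hf0mv : (f 0 : ℕ) ≠ mv := by
      intro h
      have h02 := (hiso 0 2).mp (by decide)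
      rw [hvlt 0 h01, hvgt 2 h12, Fin.castSucc_lt_castSucc_iff] at h02
      have heq : (⟨(f 0 : ℕ), by omega⟩ : Fin (n+1)) = ⟨mv, hmvlt⟩ := Fin.ext h
      rw [heq, hαm] at h02
      exact absurd h02 (not_lt_of_ge (Fin.le_last _))
    have h30 := (hiso 3 0).mp (by decide)
    rw [hvgt 3 (h12.trans h23), hvlt 0 h01, Fin.castSucc_lt_castSucc_iff] at h30
    have h02 := (hiso 0 2).mp (by decide)
    rw [hvlt 0 h01, hvgt 2 h12, Fin.castSucc_lt_castSucc_iff] at h02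
    have hne : α ⟨(f 2 : ℕ) - 1, by have := (f 2).isLt; omega⟩ < Fin.last n := by
      refine lt_of_le_of_ne (Fin.le_last _) ?_
      intro h
      have h2 := α.injective (h.trans hαm.symm)
      rw [Fin.ext_iff] at h2
      simp only [Fin.val_mk] at h2
      omega
    exact hα ⟨4, perm2431⟩ (mem2431 p) (contains2431_of' α
      (a := ⟨(f 0 : ℕ), by omega⟩) (b := ⟨mv, hmvlt⟩)
      (c := ⟨(f 2 : ℕ) - 1, by have := (f 2).isLt; omega⟩)
      (d := ⟨(f 3 : ℕ) - 1, by have := (f 3).isLt; omega⟩)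
      (by simp only [Fin.val_mk]; omega) (by simp only [Fin.val_mk]; omega)
      (by simp only [Fin.val_mk]; omega)
      rfl hαm rfl rfl h30 h02 hne)
  · -- decreasing pattern
    obtain ⟨f, hf, hiso⟩ :
        Contains (Fin.revPerm : Perm (Fin (p+1))) (insertMax α j) := hcont
    by_cases hex : ∃ b, (f b : ℕ) = mv + 1
    case neg =>
      push_neg at hex
      refine hα ⟨p+1, Fin.revPerm⟩ (memRev p)
        (contains_of_insertMax_off f hf hiso ?_)
      intro b; rw [hM]; exact hex b
    case pos =>
    obtain ⟨b, hfb⟩ := hex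
    have hmaxval : insertMax α j (f b) = Fin.last (n+1) :=
      insertMax_apply_of_eq α j (by omega)
    have hall : ∀ c, c ≠ b →
        (Fin.revPerm : Perm (Fin (p+1))) c < Fin.revPerm b := by
      intro c hc
      refine (hiso c b).mpr (lt_of_le_of_ne ?_ ?_)
      · rw [hmaxval]; exact Fin.le_last _
      · intro h
        exact hc (hf.injective ((insertMax α j).injective h))
    have hvgt : ∀ c : Fin (p+1), ∀ hc : mv + 1 < (f c : ℕ), insertMax α j (f c)
        = (α ⟨(f c : ℕ) - 1, by have := (f c).isLt; omega⟩).castSucc := fun c hc =>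
      insertMax_apply_of_gt α j (by omega) (by simp only [Fin.val_mk]; omega)
    clear hmaxval
    have hb0 : b = 0 := by
      by_contra hbne
      have h0 : Fin.revPerm (0 : Fin (p+1)) < Fin.revPerm b :=
        hall 0 (fun h => hbne h.symm)
      rw [Fin.revPerm_apply, Fin.revPerm_apply] at h0
      have h1 : Fin.rev (0 : Fin (p+1)) = Fin.last p := by
        apply Fin.ext
        rw [Fin.val_rev, Fin.val_last]
        simp
      rw [h1] at h0
      exact absurd h0 (not_lt_of_ge (Fin.le_last _))
    subst hb0
    have hfge : ∀ c : Fin (p+1), c ≠ 0 → mv + 1 < (f c : ℕ) := by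
      intro c hc
      have h0c := hf (Fin.pos_of_ne_zero hc)
      rw [Fin.lt_iff_val_lt_val, hfb] at h0c
      exact h0c
    set g : Fin (p+1) → Fin (n+1) := fun t =>
      if t = 0 then ⟨mv, hmvlt⟩
      else ⟨(f t : ℕ) - 1, by have := (f t).isLt; omega⟩ with hg
    have hgmono : StrictMono g := by
      intro x y hxy
      have hyne : y ≠ 0 := by
        intro h
        subst h
        exact absurd hxy (by simp)
      rw [hg]
      dsimp only
      rw [if_neg hyne]
      by_cases hx : x = 0
      · subst hx
        rw [if_pos rfl, Fin.lt_iff_val_lt_val]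
        simp only [Fin.val_mk]
        have := hfge y hyne
        omega
      · rw [if_neg hx, Fin.lt_iff_val_lt_val]
        simp only [Fin.val_mk]
        have h1 := hfge x hx
        have h2 := hf hxy
        rw [Fin.lt_iff_val_lt_val] at h2
        omega
    have hgdec : ∀ a b : Fin (p+1), a < b → α (g b) < α (g a) := by
      intro a b hab
      have hbne : b ≠ 0 := by
        intro h
        subst h
        exact absurd hab (by simp)
      have hgb : g b = ⟨(f b : ℕ) - 1, by have := (f b).isLt; omega⟩ := by
        rw [hg]; exact if_neg hbne
      by_cases ha : a = 0
      · subst ha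
        have hga : g 0 = ⟨mv, hmvlt⟩ := by rw [hg]; exact if_pos rfl
        rw [hgb, hga]
        have hstep : α ⟨(f b : ℕ) - 1, by have := (f b).isLt; omega⟩ < Fin.last n := by
          refine lt_of_le_of_ne (Fin.le_last _) ?_
          intro h
          have h2 := α.injective (h.trans hαm.symm)
          rw [Fin.ext_iff] at h2
          simp only [Fin.val_mk] at h2
          have := hfge b hbne
          omega
        exact hstep.trans_eq hαm.symm
      · have hga : g a = ⟨(f a : ℕ) - 1, by have := (f a).isLt; omega⟩ := by
          rw [hg]; exact if_neg ha
        have hrev : Fin.revPerm b < Fin.revPerm a := by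
          rw [Fin.revPerm_apply, Fin.revPerm_apply, Fin.rev_lt_rev]
          exact hab
        have h1 := (hiso b a).mp hrev
        rw [hvgt b (hfge b hbne), hvgt a (hfge a ha),
          Fin.castSucc_lt_castSucc_iff] at h1
        rw [hgb, hga]
        exact h1
    exact hα ⟨p+1, Fin.revPerm⟩ (memRev p) (containsRev_of α g hgmono hgdec)

end Aux

/-- For `p ≥ 2` and `P = {312, 2431, (p+1)p…21}` : if `α ∈ S_n(P)`,
`n ≥ 1`, has exactly `k` active sites, then `α = λ^{↓k}` or `α = λ^{↓(k-1)}` for some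
`λ ∈ S_{n-1}(P)`. -/
theorem exists_parent_insert (p : ℕ) (hp : 2 ≤ p) (P : PatternSet)
    (hP : P = {⟨3, perm312⟩, ⟨4, perm2431⟩,
      ⟨p + 1, (Fin.revPerm : Equiv.Perm (Fin (p + 1)))⟩})
    {n : ℕ} (α : Equiv.Perm (Fin (n + 1))) (hα : AvoidsSet α P) (k : ℕ)
    (hk : numActive P α = k) :
    ∃ lam : Equiv.Perm (Fin n), AvoidsSet lam P ∧
      (α = insertMax lam k ∨ α = insertMax lam (k - 1)) := by
  obtain rfl : P = Pset p := hP
  set mv := (maxPos α : ℕ) with hmv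
  have hmvlt : mv < n + 1 := (maxPos α).isLt
  set j := n + 1 - mv with hj
  have hj1 : 1 ≤ j := by omega
  have hj2 : j ≤ n + 1 := by omega
  have hins : α = insertMax (deleteMax α) j := insertMax_deleteMax α
  set S := {i : ℕ | ActiveSite (Pset p) α i} with hS
  have hlam : AvoidsSet (deleteMax α) (Pset p) := by
    intro τ hτ hc
    refine hα τ hτ ?_
    rw [hins]
    exact contains_insertMax j hc
  have hC4 : j ∈ S := ⟨hj1, by omega, siteJActive p α hα⟩
  have hC3 : ∀ i ∈ S, i ≤ j + 1 := by
    intro i hi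
    by_contra hcon
    exact activeBound p i α hi.2.1 (by omega) hi.2.2
  have hC2 : ∀ i, 1 ≤ i → (i+1) ∈ S → i ∈ S := by
    intro i h1 hi
    exact ⟨h1, by have := hi.2.1; omega,
      activeStep p i h1 (by have := hi.2.1; omega) α hi.2.2⟩
  have hdown : ∀ d, 1 ≤ j - d → (j - d) ∈ S := by
    intro d
    induction d with
    | zero => intro _; simpa using hC4
    | succ d ih =>
      intro hd
      have h1 : 1 ≤ j - d := by omega
      have h2 := ih h1
      have heq : j - (d+1) + 1 = j - d := by omega
      exact hC2 _ hd (by rw [heq]; exact h2)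
  have hIcc : ∀ i, 1 ≤ i → i ≤ j → i ∈ S := by
    intro i h1 h2
    have h3 := hdown (j - i) (by omega)
    rwa [show j - (j - i) = i by omega] at h3
  have hkS : S.ncard = k := hk
  by_cases htop : (j+1) ∈ S
  · have hSeq : S = Set.Icc 1 (j+1) := by
      apply Set.ext
      intro i
      constructor
      · exact fun hi => ⟨hi.1, hC3 i hi⟩
      · rintro ⟨h1, h2⟩
        rcases eq_or_lt_of_le h2 with h | h
        · subst h; exact htop
        · exact hIcc i h1 (by omega)
    have hkk : k = j + 1 := by
      rw [← hkS, hSeq, ← Finset.coe_Icc, Set.ncard_coe_finset, Nat.card_Icc]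
      omega
    refine ⟨deleteMax α, hlam, Or.inr ?_⟩
    rw [hkk]
    simpa using hins
  · have hSeq : S = Set.Icc 1 j := by
      apply Set.ext
      intro i
      constructor
      · intro hi
        have h2 := hC3 i hi
        have h3 : i ≠ j + 1 := fun h => htop (h ▸ hi)
        exact ⟨hi.1, by omega⟩
      · rintro ⟨h1, h2⟩
        exact hIcc i h1 h2
    have hkk : k = j := by
      rw [← hkS, hSeq, ← Finset.coe_Icc, Set.ncard_coe_finset, Nat.card_Icc]
      omega
    refine ⟨deleteMax α, hlam, Or.inl ?_⟩
    rw [hkk]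
    exact hins
end
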